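/- arXiv:1312.7679 — 2 statements merged into one kernel-verified Lean document; each statement's English description precedes it below -/
import Mathlib

section
/- For any n ≥ 1, in the braid group B_{n+1} with Artin generators σ₁,…,σₙ, the word σ₁σ₂⋯σₙ · σ₁σ₂⋯σ_{n-1}σₙ⁻¹ · σ₁σ₂⋯σ_{n-1}⁻¹σₙ⁻¹ · ⋯ · σ₁⁻¹σ₂⁻¹⋯σₙ⁻¹ (the toric braid word (σ₁⋯σₙ)^{n+1} with a specified staircase pattern of crossings inverted) represents the identity element of B_{n+1}. -/
/-- The braid relations on n Artin generators σ₁,…,σₙ (indexed by `Fin n` as 0,…,n-1):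
σᵢσⱼ = σⱼσᵢ for |i-j| ≥ 2, and σᵢσᵢ₊₁σᵢ = σᵢ₊₁σᵢσᵢ₊₁. -/
def braidRels (n : ℕ) : Set (FreeGroup (Fin n)) :=
  {r | ∃ i j : Fin n, (i : ℕ) + 2 ≤ (j : ℕ) ∧
      r = FreeGroup.of i * FreeGroup.of j * (FreeGroup.of j * FreeGroup.of i)⁻¹} ∪
  {r | ∃ i j : Fin n, (i : ℕ) + 1 = (j : ℕ) ∧
      r = FreeGroup.of i * FreeGroup.of j * FreeGroup.of i *
        (FreeGroup.of j * FreeGroup.of i * FreeGroup.of j)⁻¹}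

/-- The braid group B_{n+1} on n+1 strands, presented by n generators. -/
def BraidGroup (n : ℕ) : Type := PresentedGroup (braidRels n)

instance (n : ℕ) : Group (BraidGroup n) := by unfold BraidGroup; infer_instance

/-- `braidGen n i` is the generator σ_{i+1} of B_{n+1} if i < n, and 1 otherwise. -/
def braidGen (n : ℕ) (i : ℕ) : BraidGroup n :=
  if h : i < n then PresentedGroup.of (⟨i, h⟩ : Fin n) else 1

/-- The k-th block of the staircase word: σ₁⋯σ_{n-k}·σ_{n-k+1}⁻¹⋯σₙ⁻¹. -/
def staircaseBlock (n k : ℕ) : BraidGroup n :=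
  ((List.range (n - k)).map fun i => braidGen n i).prod *
    ((List.range k).map fun i => (braidGen n (n - k + i))⁻¹).prod



section Abstract
variable {G : Type*} [Group G]

/-- ascending product a s * a (s+1) * ⋯ * a (s+m-1) -/
def ascP (a : ℕ → G) : ℕ → ℕ → G
  | _, 0 => 1
  | s, m + 1 => a s * ascP a (s + 1) m

/-- descending product a (s+m-1) * ⋯ * a s -/
def descP (a : ℕ → G) : ℕ → ℕ → G
  | _, 0 => 1
  | s, m + 1 => a (s + m) * descP a s m

def DelP (a : ℕ → G) : ℕ → ℕ → G
  | _, 0 => 1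
  | s, m + 1 => ascP a s (m + 1) * DelP a s m

def RpartP (a : ℕ → G) (n : ℕ) : ℕ → G
  | 0 => 1
  | m + 1 => RpartP a n m * descP a m (n - m)

variable (a : ℕ → G)

lemma ascP_succ' (s m : ℕ) : ascP a s (m + 1) = ascP a s m * a (s + m) := by
  induction m generalizing s with
  | zero => simp [ascP]
  | succ m ih =>
    have h : s + 1 + m = s + (m + 1) := by omega
    rw [show ascP a s (m+2) = a s * ascP a (s+1) (m+1) from rfl, ih, h,
      show ascP a s (m+1) = a s * ascP a (s+1) m from rfl, mul_assoc]

lemma descP_succ' (s m : ℕ) : descP a s (m + 1) = descP a (s + 1) m * a s := by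
  induction m generalizing s with
  | zero => simp [descP]
  | succ m ih =>
    have h : s + 1 + m = s + (m + 1) := by omega
    rw [show descP a s (m+2) = a (s + (m+1)) * descP a s (m+1) from rfl, ih,
      show descP a (s+1) (m+1) = a (s+1+m) * descP a (s+1) m from rfl, h, mul_assoc]

lemma comm_a_descP (hc : ∀ i j, i + 2 ≤ j → Commute (a i) (a j))
    (j s k : ℕ) (h : j + 2 ≤ s) : Commute (a j) (descP a s k) := by
  induction k with
  | zero => exact Commute.one_right _
  | succ k ih => exact Commute.mul_right (hc j (s + k) (by omega)) ih

lemma comm_a_ascP (hc : ∀ i j, i + 2 ≤ j → Commute (a i) (a j))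
    (j s m : ℕ) (h : j + 2 ≤ s) : Commute (a j) (ascP a s m) := by
  induction m generalizing s with
  | zero => exact Commute.one_right _
  | succ m ih => exact Commute.mul_right (hc j s h) (ih (s+1) (by omega))

lemma comm_ascP_descP (hc : ∀ i j, i + 2 ≤ j → Commute (a i) (a j))
    (s m t k : ℕ) (h : s + m + 1 ≤ t) :
    Commute (ascP a s m) (descP a t k) := by
  induction m generalizing s with
  | zero => exact Commute.one_left _
  | succ m ih =>
    exact Commute.mul_left (comm_a_descP a hc s t k (by omega)) (ih (s+1) (by omega))

lemma comm_DelP_descP (hc : ∀ i j, i + 2 ≤ j → Commute (a i) (a j))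
    (s j t k : ℕ) (h : s + j + 1 ≤ t) :
    Commute (DelP a s j) (descP a t k) := by
  induction j with
  | zero => exact Commute.one_left _
  | succ j ih =>
    exact Commute.mul_left (comm_ascP_descP a hc s (j+1) t k (by omega)) (ih (by omega))

lemma shift_a (hc : ∀ i j, i + 2 ≤ j → Commute (a i) (a j)) (N : ℕ)
    (hb : ∀ i, i + 2 ≤ N → a i * a (i+1) * a i = a (i+1) * a i * a (i+1)) :
    ∀ m s i, s ≤ i → i + 2 ≤ s + m → s + m ≤ N →
    ascP a s m * a i = a (i + 1) * ascP a s m := by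
  intro m
  induction m with
  | zero => intro s i h1 h2 h3; omega
  | succ m ih =>
    intro s i h1 h2 h3
    rcases Nat.lt_or_ge s i with hlt | hge
    · rw [show ascP a s (m+1) = a s * ascP a (s+1) m from rfl, mul_assoc,
        ih (s+1) i (by omega) (by omega) (by omega), ← mul_assoc, ← mul_assoc,
        (hc s (i+1) (by omega)).eq]
    · have hi : i = s := le_antisymm hge h1
      subst hi
      obtain ⟨m', rfl⟩ : ∃ m', m = m' + 1 := ⟨m - 1, by omega⟩
      have h4 : ascP a i (m' + 2) = a i * (a (i+1) * ascP a (i+2) m') := rfl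
      rw [h4]
      simp only [← mul_assoc]
      rw [mul_assoc (a i * a (i+1)) (ascP a (i+2) m') (a i),
        ← (comm_a_ascP a hc i (i+2) m' (by omega)).eq]
      simp only [← mul_assoc]
      rw [hb i (by omega)]

lemma shift_descP (hc : ∀ i j, i + 2 ≤ j → Commute (a i) (a j)) (N : ℕ)
    (hb : ∀ i, i + 2 ≤ N → a i * a (i+1) * a i = a (i+1) * a i * a (i+1)) :
    ∀ k m s t, s ≤ t → t + k + 1 ≤ s + m → s + m ≤ N →
    ascP a s m * descP a t k = descP a (t + 1) k * ascP a s m := by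
  intro k
  induction k with
  | zero => intro m s t _ _ _; simp [descP]
  | succ k ih =>
    intro m s t h1 h2 h3
    rw [show descP a t (k+1) = a (t + k) * descP a t k from rfl, ← mul_assoc,
      shift_a a hc N hb m s (t+k) (by omega) (by omega) h3, mul_assoc,
      ih m s t h1 (by omega) h3, ← mul_assoc,
      show descP a (t+1) (k+1) = a (t+1+k) * descP a (t+1) k from rfl,
      show t + k + 1 = t + 1 + k by omega]

lemma DelP_eq_desc_mul (hc : ∀ i j, i + 2 ≤ j → Commute (a i) (a j)) (N : ℕ)
    (hb : ∀ i, i + 2 ≤ N → a i * a (i+1) * a i = a (i+1) * a i * a (i+1)) :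
    ∀ k s, s + (k + 1) ≤ N →
    DelP a s (k + 1) = descP a s (k + 1) * DelP a (s + 1) k := by
  intro k
  induction k with
  | zero => intro s h; simp [DelP, ascP, descP]
  | succ k ih =>
    intro s h
    have e1 : DelP a s (k+2) = ascP a s (k+2) * DelP a s (k+1) := rfl
    have e2 : DelP a (s+1) (k+1) = ascP a (s+1) (k+1) * DelP a (s+1) k := rfl
    rw [e1, ih s (by omega), ← mul_assoc,
      shift_descP a hc N hb (k+1) (k+2) s s le_rfl (by omega) (by omega),
      show ascP a s (k+2) = a s * ascP a (s+1) (k+1) from rfl]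
    rw [mul_assoc (descP a (s+1) (k+1)), mul_assoc (a s), ← e2, ih (s+1) (by omega),
      descP_succ' a s (k+1)]
    group

lemma DelP_eq_RpartP (hc : ∀ i j, i + 2 ≤ j → Commute (a i) (a j)) (n : ℕ)
    (hb : ∀ i, i + 2 ≤ n → a i * a (i+1) * a i = a (i+1) * a i * a (i+1)) :
    DelP a 0 n = RpartP a n n := by
  have key : ∀ m, m ≤ n → DelP a 0 n = RpartP a n m * DelP a m (n - m) := by
    intro m
    induction m with
    | zero => intro _; simp [RpartP]
    | succ m ih =>
      intro h
      obtain ⟨d, hd⟩ : ∃ d, n - m = d + 1 := ⟨n - m - 1, by omega⟩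
      rw [ih (by omega), hd, DelP_eq_desc_mul a hc n hb d m (by omega),
        show RpartP a n (m+1) = RpartP a n m * descP a m (n - m) from rfl, hd,
        show n - (m+1) = d by omega, mul_assoc]
  have := key n le_rfl
  simpa [show n - n = 0 by omega, DelP] using this

end Abstract
section Lists
variable {G : Type*} [Group G] (a : ℕ → G)

lemma prod_range_map_asc : ∀ m s, ((List.range m).map (fun i => a (s + i))).prod = ascP a s m := by
  intro m
  induction m with
  | zero => intro s; simp [ascP]
  | succ m ih =>
    intro s
    rw [List.range_succ, List.map_append, List.prod_append, ih, ascP_succ']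
    simp

lemma prod_range_map_inv_desc :
    ∀ k s, ((List.range k).map (fun i => (a (s + i))⁻¹)).prod = (descP a s k)⁻¹ := by
  intro k
  induction k with
  | zero => intro s; simp [descP]
  | succ k ih =>
    intro s
    rw [List.range_succ, List.map_append, List.prod_append, ih,
      show descP a s (k+1) = a (s+k) * descP a s k from rfl, mul_inv_rev]
    simp

lemma suffix_prod (n : ℕ) (hc : ∀ i j, i + 2 ≤ j → Commute (a i) (a j))
    (hb : ∀ i, i + 2 ≤ n → a i * a (i+1) * a i = a (i+1) * a i * a (i+1)) :
    ∀ m, 1 ≤ m → m ≤ n + 1 →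
    ((List.range' (n + 1 - m) m).map
        (fun k => ascP a 0 (n - k) * (descP a (n - k) k)⁻¹)).prod
      = DelP a 0 (m - 1) * (RpartP a n m)⁻¹ := by
  intro m
  induction m with
  | zero => omega
  | succ m ih =>
    intro _ hm1
    rcases Nat.eq_zero_or_pos m with rfl | hm
    · simp only [show n + 1 - 1 = n by omega, List.range'_succ]
      simp [show n - n = 0 by omega, ascP, DelP, RpartP, descP]
    · rw [List.range'_succ, List.map_cons, List.prod_cons,
        show n + 1 - (m + 1) + 1 = n + 1 - m by omega,
        ih hm (by omega),
        show n - (n + 1 - (m + 1)) = m by omega,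
        show n + 1 - (m + 1) = n - m by omega]
      have hcom := ((comm_DelP_descP a hc 0 (m - 1) m (n - m) (by omega)).inv_right).symm.eq
      obtain ⟨m', rfl⟩ : ∃ m', m = m' + 1 := ⟨m - 1, by omega⟩
      simp only [Nat.add_sub_cancel] at hcom ⊢
      calc ascP a 0 (m' + 1) * (descP a (m' + 1) (n - (m' + 1)))⁻¹ *
            (DelP a 0 m' * (RpartP a n (m' + 1))⁻¹)
          = ascP a 0 (m' + 1) * ((descP a (m' + 1) (n - (m' + 1)))⁻¹ * DelP a 0 m') *
            (RpartP a n (m' + 1))⁻¹ := by group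
        _ = ascP a 0 (m' + 1) * (DelP a 0 m' * (descP a (m' + 1) (n - (m' + 1)))⁻¹) *
            (RpartP a n (m' + 1))⁻¹ := by rw [hcom]
        _ = (ascP a 0 (m' + 1) * DelP a 0 m') *
            ((RpartP a n (m' + 1)) * descP a (m' + 1) (n - (m' + 1)))⁻¹ := by
              rw [mul_inv_rev]; group
        _ = DelP a 0 (m' + 1) * (RpartP a n (m' + 2))⁻¹ := by
              rw [show DelP a 0 (m' + 1) = ascP a 0 (m' + 1) * DelP a 0 m' from rfl,
                show RpartP a n (m' + 2) = RpartP a n (m' + 1) * descP a (m' + 1) (n - (m' + 1))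
                  from rfl]

end Lists

section Concrete

lemma braid_rel_one {n : ℕ} {r : FreeGroup (Fin n)} (hr : r ∈ braidRels n) :
    PresentedGroup.mk (braidRels n) r = 1 :=
  (QuotientGroup.eq_one_iff r).mpr (Subgroup.subset_normalClosure hr)

lemma braidGen_comm {n : ℕ} (i j : ℕ) (h : i + 2 ≤ j) :
    Commute (braidGen n i) (braidGen n j) := by
  by_cases hj : j < n
  · have hi : i < n := by omega
    have hr : (FreeGroup.of (⟨i, hi⟩ : Fin n) * FreeGroup.of (⟨j, hj⟩ : Fin n) *
        (FreeGroup.of (⟨j, hj⟩ : Fin n) * FreeGroup.of (⟨i, hi⟩ : Fin n))⁻¹) ∈ braidRels n :=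
      Or.inl ⟨⟨i, hi⟩, ⟨j, hj⟩, h, rfl⟩
    have h1 := braid_rel_one hr
    rw [map_mul, map_inv, map_mul, mul_inv_eq_one] at h1
    have e1 : braidGen n i = (PresentedGroup.of (⟨i, hi⟩ : Fin n) : BraidGroup n) := dif_pos hi
    have e2 : braidGen n j = (PresentedGroup.of (⟨j, hj⟩ : Fin n) : BraidGroup n) := dif_pos hj
    rw [e1, e2]
    exact h1
  · have h1 : braidGen n j = 1 := dif_neg hj
    rw [h1]
    exact Commute.one_right _

lemma braidGen_braid {n : ℕ} (i : ℕ) (h : i + 2 ≤ n) :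
    braidGen n i * braidGen n (i+1) * braidGen n i
      = braidGen n (i+1) * braidGen n i * braidGen n (i+1) := by
  have hi : i < n := by omega
  have hi1 : i + 1 < n := by omega
  have hr : (FreeGroup.of (⟨i, hi⟩ : Fin n) * FreeGroup.of (⟨i+1, hi1⟩ : Fin n) *
      FreeGroup.of (⟨i, hi⟩ : Fin n) *
      (FreeGroup.of (⟨i+1, hi1⟩ : Fin n) * FreeGroup.of (⟨i, hi⟩ : Fin n) *
        FreeGroup.of (⟨i+1, hi1⟩ : Fin n))⁻¹) ∈ braidRels n :=
    Or.inr ⟨⟨i, hi⟩, ⟨i+1, hi1⟩, rfl, rfl⟩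
  have h1 := braid_rel_one hr
  rw [map_mul, map_inv, map_mul, map_mul, map_mul, mul_inv_eq_one] at h1
  have e1 : braidGen n i = (PresentedGroup.of (⟨i, hi⟩ : Fin n) : BraidGroup n) := dif_pos hi
  have e2 : braidGen n (i+1) = (PresentedGroup.of (⟨i+1, hi1⟩ : Fin n) : BraidGroup n) := dif_pos hi1
  rw [e1, e2]
  exact h1

lemma staircaseBlock_eq (n k : ℕ) :
    staircaseBlock n k
      = ascP (braidGen n) 0 (n - k) * (descP (braidGen n) (n - k) k)⁻¹ := by
  rw [staircaseBlock]
  congr 1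
  · have := prod_range_map_asc (braidGen n) (n - k) 0
    simpa using this
  · exact prod_range_map_inv_desc (braidGen n) k (n - k)

end Concrete

/-- the word (σ₁⋯σₙ)^{n+1} with the staircase pattern of crossings
inverted, i.e. the product of the blocks σ₁⋯σ_{n-k}·σ_{n-k+1}⁻¹⋯σₙ⁻¹ for
k = 0,…,n, is trivial in B_{n+1}. -/
theorem staircase_toric_braid_trivial (n : ℕ) (hn : 1 ≤ n) :
    ((List.range (n + 1)).map fun k => staircaseBlock n k).prod = 1 := by
  have hc := fun i j h => braidGen_comm (n := n) i j h
  have hb := fun i h => braidGen_braid (n := n) i h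
  have hs := suffix_prod (braidGen n) n hc hb (n + 1) (by omega) le_rfl
  simp only [Nat.sub_self] at hs
  rw [List.range_eq_range', show (fun k => staircaseBlock n k)
      = (fun k => ascP (braidGen n) 0 (n - k) * (descP (braidGen n) (n - k) k)⁻¹)
      from funext (staircaseBlock_eq n)]
  rw [hs, Nat.add_sub_cancel,
    show RpartP (braidGen n) n (n + 1)
      = RpartP (braidGen n) n n * descP (braidGen n) n (n - n) from rfl,
    Nat.sub_self, show descP (braidGen n) n 0 = 1 from rfl, mul_one,
    ← DelP_eq_RpartP (braidGen n) hc n hb, mul_inv_cancel]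
end

section
/- In the braid group B_p (p ≥ 3), for 1 ≤ a < p the braid word σ_a σ_{a+1}⋯σ_{p-1} · σ_{a-1}σ_a⋯σ_{p-2} · ⋯ · σ₁σ₂⋯σ_{p-a} is conjugate, after Markov destabilizations removing the last a strands, to the toric braid (σ₁σ₂⋯σ_{p-a-1})^a in B_{p-a}; in particular, as braid words one has the identity that σ_aσ_{a+1}⋯σ_{p-1}·σ_{a-1}σ_a⋯σ_{p-2}·⋯·σ₁σ₂⋯σ_{p-a} maps to (σ₁⋯σ_{p-a-1})^a under the closure operation (their closures are isotopic links). -/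
/-- A single Markov move (or braid-relation move) on braid words, viewed as
elements of free groups on `n` generators (i.e. words in B_{n+1}):
multiplying by an element of the normal closure of the braid relations
(equality in the braid group), conjugation, and positive/negative
(de)stabilization. Closures of braids related by these moves are isotopic links
(Markov's theorem). -/
inductive MarkovStep : (Σ n : ℕ, FreeGroup (Fin n)) → (Σ n : ℕ, FreeGroup (Fin n)) → Prop
  | braid_rel (n : ℕ) (w r : FreeGroup (Fin n))
      (hr : r ∈ Subgroup.normalClosure (braidRels n)) :
      MarkovStep ⟨n, w⟩ ⟨n, w * r⟩
  | conj (n : ℕ) (w v : FreeGroup (Fin n)) :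
      MarkovStep ⟨n, w⟩ ⟨n, v * w * v⁻¹⟩
  | stab_pos (n : ℕ) (w : FreeGroup (Fin n)) :
      MarkovStep ⟨n, w⟩ ⟨n + 1, FreeGroup.map Fin.castSucc w * FreeGroup.of (Fin.last n)⟩
  | stab_neg (n : ℕ) (w : FreeGroup (Fin n)) :
      MarkovStep ⟨n, w⟩ ⟨n + 1, FreeGroup.map Fin.castSucc w * (FreeGroup.of (Fin.last n))⁻¹⟩

/-- Markov equivalence of braid words: braids with isotopic closures. -/
def MarkovEquiv : (Σ n : ℕ, FreeGroup (Fin n)) → (Σ n : ℕ, FreeGroup (Fin n)) → Prop :=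
  Relation.EqvGen MarkovStep

/-- The free-group generator σ_{i+1} (1-based σ-index i+1), or 1 if out of range. -/
def freeGen (n : ℕ) (i : ℕ) : FreeGroup (Fin n) :=
  if h : i < n then FreeGroup.of (⟨i, h⟩ : Fin n) else 1


namespace FB

noncomputable def π (n : ℕ) : FreeGroup (Fin n) →* PresentedGroup (braidRels n) :=
  PresentedGroup.mk (braidRels n)

lemma me_of_eq {n : ℕ} {w w' : FreeGroup (Fin n)} (h : w = w') :
    MarkovEquiv ⟨n, w⟩ ⟨n, w'⟩ := by subst h; exact Relation.EqvGen.refl _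

lemma me_trans {x y z} (h1 : MarkovEquiv x y) (h2 : MarkovEquiv y z) : MarkovEquiv x z :=
  Relation.EqvGen.trans _ _ _ h1 h2

lemma me_conj {n : ℕ} (w v : FreeGroup (Fin n)) : MarkovEquiv ⟨n, w⟩ ⟨n, v * w * v⁻¹⟩ :=
  Relation.EqvGen.rel _ _ (MarkovStep.conj n w v)

lemma me_destab {n : ℕ} (u : FreeGroup (Fin n)) :
    MarkovEquiv ⟨n + 1, FreeGroup.map Fin.castSucc u * FreeGroup.of (Fin.last n)⟩ ⟨n, u⟩ :=
  Relation.EqvGen.symm _ _ (Relation.EqvGen.rel _ _ (MarkovStep.stab_pos n u))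

lemma me_braid {n : ℕ} {w w' : FreeGroup (Fin n)} (h : π n w = π n w') :
    MarkovEquiv ⟨n, w⟩ ⟨n, w'⟩ := by
  have h' : (QuotientGroup.mk w : FreeGroup (Fin n) ⧸ Subgroup.normalClosure (braidRels n)) =
      QuotientGroup.mk w' := h
  have hm : w⁻¹ * w' ∈ Subgroup.normalClosure (braidRels n) := QuotientGroup.eq.mp h'
  have h2 : w * (w⁻¹ * w') = w' := by group
  exact h2 ▸ Relation.EqvGen.rel _ _ (MarkovStep.braid_rel n w (w⁻¹ * w') hm)

lemma pi_rel_one {n : ℕ} {r : FreeGroup (Fin n)} (hr : r ∈ braidRels n) : π n r = 1 := by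
  have : (QuotientGroup.mk r : FreeGroup (Fin n) ⧸ Subgroup.normalClosure (braidRels n)) = 1 :=
    (QuotientGroup.eq_one_iff r).mpr (Subgroup.subset_normalClosure hr)
  exact this

lemma freeGen_lt {n i : ℕ} (h : i < n) : freeGen n i = FreeGroup.of (⟨i, h⟩ : Fin n) := dif_pos h

lemma pi_comm {n : ℕ} {i j : ℕ} (hij : i + 2 ≤ j) :
    π n (freeGen n i) * π n (freeGen n j) = π n (freeGen n j) * π n (freeGen n i) := by
  by_cases hj : j < n
  · have hi : i < n := by omega
    have hr := pi_rel_one (n := n)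
      (Or.inl ⟨⟨i, hi⟩, ⟨j, hj⟩, hij, rfl⟩ :
        (FreeGroup.of (⟨i, hi⟩ : Fin n) * FreeGroup.of (⟨j, hj⟩ : Fin n) *
          (FreeGroup.of (⟨j, hj⟩ : Fin n) * FreeGroup.of (⟨i, hi⟩ : Fin n))⁻¹) ∈ braidRels n)
    rw [freeGen_lt hi, freeGen_lt hj]
    simp only [map_mul, map_inv] at hr
    rw [mul_inv_eq_one] at hr
    simpa [map_mul] using hr
  · rw [show freeGen n j = 1 from dif_neg hj]; simp

lemma pi_braid {n : ℕ} {i : ℕ} (h : i + 1 < n) :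
    π n (freeGen n i) * π n (freeGen n (i+1)) * π n (freeGen n i) =
    π n (freeGen n (i+1)) * π n (freeGen n i) * π n (freeGen n (i+1)) := by
  have hi : i < n := by omega
  have hr := pi_rel_one (n := n)
    (Or.inr ⟨⟨i, hi⟩, ⟨i+1, h⟩, rfl, rfl⟩ :
      (FreeGroup.of (⟨i, hi⟩ : Fin n) * FreeGroup.of (⟨i+1, h⟩ : Fin n) *
        FreeGroup.of (⟨i, hi⟩ : Fin n) *
        (FreeGroup.of (⟨i+1, h⟩ : Fin n) * FreeGroup.of (⟨i, hi⟩ : Fin n) *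
          FreeGroup.of (⟨i+1, h⟩ : Fin n))⁻¹) ∈ braidRels n)
  rw [freeGen_lt hi, freeGen_lt h]
  simp only [map_mul, map_inv] at hr
  rw [mul_inv_eq_one] at hr
  simpa [map_mul] using hr


def run (n s : ℕ) : ℕ → FreeGroup (Fin n)
  | 0 => 1
  | len + 1 => run n s len * freeGen n (s + len)

@[simp] lemma run_zero {n s : ℕ} : run n s 0 = 1 := rfl
@[simp] lemma run_succ {n s len : ℕ} : run n s (len + 1) = run n s len * freeGen n (s + len) := rfl

lemma run_eq_list (n s len : ℕ) :
    run n s len = ((List.range len).map fun i => freeGen n (s + i)).prod := by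
  induction len with
  | zero => simp
  | succ k ih => rw [List.range_succ]; simp [ih]

def Wrec (n b : ℕ) : ℕ → FreeGroup (Fin n)
  | 0 => 1
  | a + 1 => run n a b * Wrec n b a

@[simp] lemma Wrec_zero {n b : ℕ} : Wrec n b 0 = 1 := rfl
@[simp] lemma Wrec_succ {n b a : ℕ} : Wrec n b (a + 1) = run n a b * Wrec n b a := rfl

lemma Wrec_eq_list (n b a : ℕ) :
    Wrec n b a = ((List.range a).map fun l => run n (a - 1 - l) b).prod := by
  induction a with
  | zero => simp
  | succ k ih =>
      rw [List.range_succ_eq_map]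
      simp only [List.map_cons, List.prod_cons, List.map_map, Wrec_succ, ih,
        Function.comp_def, Nat.sub_zero, Nat.add_sub_cancel]
      congr 1
      refine congrArg _ (List.map_congr_left fun l _ => ?_)
      rw [show k - l.succ = k - 1 - l from by omega]

lemma map_castSucc_freeGen {n i : ℕ} (h : i < n) :
    FreeGroup.map Fin.castSucc (freeGen n i) = freeGen (n + 1) i := by
  rw [freeGen_lt h, freeGen_lt (Nat.lt_succ_of_lt h)]
  simp only [FreeGroup.map.of]
  rfl

lemma map_castSucc_run {n s len : ℕ} (h : s + len ≤ n) :
    FreeGroup.map Fin.castSucc (run n s len) = run (n + 1) s len := by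
  induction len with
  | zero => simp
  | succ k ih =>
      simp only [run_succ, map_mul]
      rw [ih (by omega), map_castSucc_freeGen (by omega)]

lemma map_castSucc_Wrec {n b : ℕ} : ∀ a, a + b ≤ n + 1 →
    FreeGroup.map Fin.castSucc (Wrec n b a) = Wrec (n + 1) b a := by
  intro a
  induction a with
  | zero => simp
  | succ k ih =>
      intro h
      simp only [Wrec_succ, map_mul]
      rw [ih (by omega), map_castSucc_run (by omega)]

lemma pi_run_comm_hi {n s : ℕ} : ∀ len {j : ℕ}, s + len + 1 ≤ j →
    π n (run n s len) * π n (freeGen n j) = π n (freeGen n j) * π n (run n s len) := by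
  intro len
  induction len with
  | zero => intro j _; simp
  | succ k ih =>
      intro j h
      simp only [run_succ, map_mul]
      rw [mul_assoc, pi_comm (by omega : s + k + 2 ≤ j), ← mul_assoc,
        ih (by omega)]
      group

lemma pi_shift {n s : ℕ} : ∀ len {i : ℕ}, s ≤ i → i + 2 ≤ s + len → s + len ≤ n →
    π n (run n s len) * π n (freeGen n i) = π n (freeGen n (i + 1)) * π n (run n s len) := by
  intro len
  induction len with
  | zero => intro i h1 h2 _; omega
  | succ k ih =>
      intro i h1 h2 h3
      rcases Nat.lt_or_ge (i + 2) (s + k + 1) with hc | hc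
      · -- i + 2 ≤ s + k
        simp only [run_succ, map_mul]
        rw [mul_assoc, ← pi_comm (by omega : i + 2 ≤ s + k), ← mul_assoc,
          ih h1 (by omega) (by omega)]
        group
      · -- i + 1 = s + k
        have hik : i = s + k - 1 := by omega
        obtain ⟨k', rfl⟩ : ∃ k', k = k' + 1 := ⟨k - 1, by omega⟩
        have hi : i = s + k' := by omega
        subst hi
        simp only [run_succ, map_mul]
        have hb : s + k' + 1 = s + (k' + 1) := by omega
        rw [hb]
        calc π n (run n s k') * π n (freeGen n (s + k')) * π n (freeGen n (s + (k' + 1))) *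
              π n (freeGen n (s + k'))
            = π n (run n s k') * (π n (freeGen n (s + k')) * π n (freeGen n (s + k' + 1)) *
              π n (freeGen n (s + k'))) := by rw [hb]; group
          _ = π n (run n s k') * (π n (freeGen n (s + k' + 1)) * π n (freeGen n (s + k')) *
              π n (freeGen n (s + k' + 1))) := by
                rw [pi_braid (by omega : s + k' + 1 < n)]
          _ = π n (freeGen n (s + k' + 1)) * π n (run n s k') * π n (freeGen n (s + k')) *
              π n (freeGen n (s + k' + 1)) := by
                rw [← mul_assoc, ← mul_assoc, ← pi_run_comm_hi k' (by omega)]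
          _ = π n (freeGen n (s + (k' + 1))) * (π n (run n s k') * π n (freeGen n (s + k')) *
              π n (freeGen n (s + (k' + 1)))) := by rw [hb]; group

lemma pi_push {n s : ℕ} : ∀ L, s + L + 1 ≤ n →
    π n (run n (s + 1) L) * π n (run n s (L + 1)) =
    π n (run n s (L + 1)) * π n (run n s L) := by
  intro L
  induction L with
  | zero => intro _; simp
  | succ k ih =>
      intro h
      have e1 : π n (freeGen n (s + 1 + k)) * π n (run n s (k + 2)) =
          π n (run n s (k + 2)) * π n (freeGen n (s + k)) := by
        have := pi_shift (n := n) (s := s) (k + 2) (i := s + k) (by omega) (by omega) (by omega)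
        rw [show s + 1 + k = s + k + 1 from by omega, ← this]
      calc π n (run n (s + 1) (k + 1)) * π n (run n s (k + 2))
          = π n (run n (s + 1) k) * (π n (freeGen n (s + 1 + k)) * π n (run n s (k + 2))) := by
            simp only [run_succ, map_mul]; group
        _ = π n (run n (s + 1) k) * (π n (run n s (k + 2)) * π n (freeGen n (s + k))) := by
            rw [e1]
        _ = (π n (run n (s + 1) k) * π n (run n s (k + 1))) *
            (π n (freeGen n (s + k + 1)) * π n (freeGen n (s + k))) := by
            simp only [run_succ, map_mul]; group
        _ = (π n (run n s (k + 1)) * π n (run n s k)) *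
            (π n (freeGen n (s + k + 1)) * π n (freeGen n (s + k))) := by
            rw [ih (by omega)]
        _ = π n (run n s (k + 1)) * (π n (run n s k) * π n (freeGen n (s + k + 1))) *
            π n (freeGen n (s + k)) := by group
        _ = π n (run n s (k + 1)) * (π n (freeGen n (s + k + 1)) * π n (run n s k)) *
            π n (freeGen n (s + k)) := by
            rw [pi_run_comm_hi k (by omega)]
        _ = π n (run n s (k + 1 + 1)) * π n (run n s (k + 1)) := by
            simp only [run_succ, map_mul]; group

lemma pi_pushW {n m : ℕ} : ∀ a, a + m ≤ n →
    π n (run n a m) * π n (Wrec n (m + 1) a) =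
    π n (Wrec n (m + 1) a) * π n (run n 0 m) := by
  intro a
  induction a with
  | zero => intro _; simp
  | succ k ih =>
      intro h
      simp only [Wrec_succ, map_mul]
      calc π n (run n (k + 1) m) * (π n (run n k (m + 1)) * π n (Wrec n (m + 1) k))
          = π n (run n k (m + 1)) * π n (run n k m) * π n (Wrec n (m + 1) k) := by
            rw [← mul_assoc, pi_push m (by omega)]
        _ = π n (run n k (m + 1)) * (π n (Wrec n (m + 1) k) * π n (run n 0 m)) := by
            rw [mul_assoc, ih (by omega)]
        _ = π n (run n k (m + 1)) * π n (Wrec n (m + 1) k) * π n (run n 0 m) := by group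


lemma main (m : ℕ) : ∀ a' n, n = a' + m + 1 → ∀ c,
    MarkovEquiv ⟨n, Wrec n (m + 1) (a' + 1) * (run n 0 m) ^ c⟩
      ⟨m, (run m 0 m) ^ (a' + c + 1)⟩ := by
  intro a'
  induction a' with
  | zero =>
      intro n hn c
      have hn' : n = m + 1 := by omega
      subst hn'
      have e0 : Wrec (m + 1) (m + 1) (0 + 1) * (run (m + 1) 0 m) ^ c =
          run (m + 1) 0 m * freeGen (m + 1) m * (run (m + 1) 0 m) ^ c := by
        rw [Wrec_succ, Wrec_zero, mul_one, run_succ, Nat.zero_add]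
      refine me_trans (me_of_eq e0) ?_
      refine me_trans (me_conj _ ((run (m + 1) 0 m) ^ c)) ?_
      have e1 : (run (m + 1) 0 m) ^ c *
          (run (m + 1) 0 m * freeGen (m + 1) m * (run (m + 1) 0 m) ^ c) *
          ((run (m + 1) 0 m) ^ c)⁻¹ = (run (m + 1) 0 m) ^ (c + 1) * freeGen (m + 1) m := by
        group
      refine me_trans (me_of_eq e1) ?_
      have e2 : (run (m + 1) 0 m) ^ (c + 1) * freeGen (m + 1) m =
          FreeGroup.map Fin.castSucc ((run m 0 m) ^ (c + 1)) * FreeGroup.of (Fin.last m) := by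
        rw [map_pow, map_castSucc_run (by omega), freeGen_lt (Nat.lt_succ_self m)]; rfl
      refine me_trans (me_of_eq e2) ?_
      refine me_trans (me_destab _) ?_
      exact me_of_eq (by rw [show 0 + c + 1 = c + 1 from by omega])
  | succ a' ih =>
      intro n hn c
      have hn' : n = a' + m + 1 + 1 := by omega
      subst hn'
      have e0 : Wrec (a' + m + 1 + 1) (m + 1) (a' + 1 + 1) * (run (a' + m + 1 + 1) 0 m) ^ c =
          run (a' + m + 1 + 1) (a' + 1) m * freeGen (a' + m + 1 + 1) (a' + m + 1) *
            (Wrec (a' + m + 1 + 1) (m + 1) (a' + 1) * (run (a' + m + 1 + 1) 0 m) ^ c) := by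
        rw [Wrec_succ, run_succ, show a' + 1 + m = a' + m + 1 from by omega, mul_assoc,
          mul_assoc]
      refine me_trans (me_of_eq e0) ?_
      refine me_trans (me_conj _
        (Wrec (a' + m + 1 + 1) (m + 1) (a' + 1) * (run (a' + m + 1 + 1) 0 m) ^ c)) ?_
      have e1 : ∀ v R g : FreeGroup (Fin (a' + m + 1 + 1)), v * (R * g * v) * v⁻¹ =
          v * R * g := by intros; group
      refine me_trans (me_of_eq (e1 _ _ _)) ?_
      have e2 : Wrec (a' + m + 1 + 1) (m + 1) (a' + 1) * (run (a' + m + 1 + 1) 0 m) ^ c *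
            run (a' + m + 1 + 1) (a' + 1) m * freeGen (a' + m + 1 + 1) (a' + m + 1) =
          FreeGroup.map Fin.castSucc (Wrec (a' + m + 1) (m + 1) (a' + 1) *
            (run (a' + m + 1) 0 m) ^ c * run (a' + m + 1) (a' + 1) m) *
            FreeGroup.of (Fin.last (a' + m + 1)) := by
        rw [map_mul, map_mul, map_pow, map_castSucc_Wrec (a' + 1) (by omega),
          map_castSucc_run (by omega), map_castSucc_run (by omega),
          freeGen_lt (by omega : a' + m + 1 < a' + m + 1 + 1)]
        rfl
      refine me_trans (me_of_eq e2) ?_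
      refine me_trans (me_destab _) ?_
      refine me_trans (me_conj _ (run (a' + m + 1) (a' + 1) m)) ?_
      have e3 : ∀ R W T : FreeGroup (Fin (a' + m + 1)),
          R * (W * T * R) * R⁻¹ = R * (W * T) := by intros; group
      refine me_trans (me_of_eq (e3 _ _ _)) ?_
      have e4 : π (a' + m + 1) (run (a' + m + 1) (a' + 1) m *
            (Wrec (a' + m + 1) (m + 1) (a' + 1) * (run (a' + m + 1) 0 m) ^ c)) =
          π (a' + m + 1) (Wrec (a' + m + 1) (m + 1) (a' + 1) *
            (run (a' + m + 1) 0 m) ^ (c + 1)) := by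
        simp only [map_mul, map_pow]
        rw [← mul_assoc, pi_pushW (a' + 1) (by omega), mul_assoc, ← pow_succ']
      refine me_trans (me_braid e4) ?_
      have h5 := ih (a' + m + 1) rfl (c + 1)
      rw [show a' + (c + 1) + 1 = a' + 1 + c + 1 from by omega] at h5
      exact h5

end FB

/-- in B_p (p ≥ 3, braid words on p-1 generators), for 1 ≤ a < p
the word σ_a⋯σ_{p-1} · σ_{a-1}⋯σ_{p-2} · ⋯ · σ₁⋯σ_{p-a} has closure isotopic to
the closure of the toric braid (σ₁⋯σ_{p-a-1})^a in B_{p-a}: the two words are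
Markov equivalent. -/
theorem final_block_is_toric (p a : ℕ) (hp : 3 ≤ p) (ha1 : 1 ≤ a) (ha2 : a < p) :
    MarkovEquiv
      ⟨p - 1, ((List.range a).map fun l =>
          ((List.range (p - a)).map fun i => freeGen (p - 1) (a - 1 - l + i)).prod).prod⟩
      ⟨p - a - 1, (((List.range (p - a - 1)).map fun i => freeGen (p - a - 1) i).prod) ^ a⟩ := by
  have key := FB.main (p - a - 1) (a - 1) (p - 1) (by omega) 0
  refine FB.me_trans (FB.me_of_eq ?_) (FB.me_trans key (FB.me_of_eq ?_))
  · rw [pow_zero, mul_one, FB.Wrec_eq_list]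
    simp only [show a - 1 + 1 = a from by omega, show p - a - 1 + 1 = p - a from by omega,
      FB.run_eq_list]
  · simp only [show a - 1 + 0 + 1 = a from by omega, FB.run_eq_list, Nat.zero_add]
end
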